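/- There exists a universal constant c > 0 such that: for all integers n, W ≥ 1, every j ∈ [-n,n], and every real λ ≥ 1, the probability under the uniform distribution P_{∞,W,n} on S_W that the diameter of the cycle of j is at least λ is at most 2·exp(−c·λ/W³). -/

import Mathlib

open Finset

/-- The integer interval `[-n, n]`, as a type. -/
abbrev Box (n : ℕ) : Type := {x : ℤ // x ∈ Finset.Icc (-(n : ℤ)) (n : ℤ)}

/-- The point `0 ∈ [-n, n]`. -/
def boxZero (n : ℕ) : Box n :=
  ⟨0, by simp⟩

/-- The maximum of the cycle of `j` under `π`, i.e. `max C_π(j)` where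
`C_π(j) = {π^k(j) : k ∈ ℤ}`. -/
noncomputable def maxCycle {n : ℕ} (π : Equiv.Perm (Box n)) (j : Box n) : ℤ :=
  sSup {x : ℤ | ∃ k : ℤ, (((π ^ k) j : Box n) : ℤ) = x}

/-- The minimum of the cycle of `j` under `π`. -/
noncomputable def minCycle {n : ℕ} (π : Equiv.Perm (Box n)) (j : Box n) : ℤ :=
  sInf {x : ℤ | ∃ k : ℤ, (((π ^ k) j : Box n) : ℤ) = x}

/-- The diameter of the cycle of `j` under `π`. -/
noncomputable def diamCycle {n : ℕ} (π : Equiv.Perm (Box n)) (j : Box n) : ℤ :=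
  maxCycle π j - minCycle π j

/-- The Boltzmann–Gibbs weight `exp(-W^{-p} Σ_i |π(i) - i|^p)`. -/
noncomputable def gibbsWeight (p : ℝ) (W n : ℕ) (π : Equiv.Perm (Box n)) : ℝ :=
  Real.exp (-(W : ℝ) ^ (-p) * ∑ i : Box n, |((π i : ℤ) : ℝ) - ((i : ℤ) : ℝ)| ^ p)

open scoped Classical in
/-- The probability of the event `E` under the Gibbs measure `P_{p,W,n}`. -/
noncomputable def gibbsProb (p : ℝ) (W n : ℕ) (E : Set (Equiv.Perm (Box n))) : ℝ :=
  (∑ π : Equiv.Perm (Box n), if π ∈ E then gibbsWeight p W n π else 0) /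
    ∑ π : Equiv.Perm (Box n), gibbsWeight p W n π

/-- The probability of a single permutation under the Gibbs measure `P_{p,W,n}`. -/
noncomputable def gibbsP (p : ℝ) (W n : ℕ) (π : Equiv.Perm (Box n)) : ℝ :=
  gibbsWeight p W n π / ∑ σ : Equiv.Perm (Box n), gibbsWeight p W n σ

/-- The set `S_W` of permutations displacing each point by at most `W`. -/
def SW (n W : ℕ) : Set (Equiv.Perm (Box n)) :=
  {π | ∀ i : Box n, |(π i : ℤ) - (i : ℤ)| ≤ (W : ℤ)}

open scoped Classical in
/-- The probability of the event `E` under the uniform measure `P_{∞,W,n}` on `S_W`. -/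
noncomputable def unifProb (W n : ℕ) (E : Set (Equiv.Perm (Box n))) : ℝ :=
  ((Finset.univ.filter fun π : Equiv.Perm (Box n) => π ∈ SW n W ∧ π ∈ E).card : ℝ) /
    ((Finset.univ.filter fun π : Equiv.Perm (Box n) => π ∈ SW n W).card : ℝ)

/-- `Period(π, j)`: the least positive `m` with `π^m(j) = j`. -/
noncomputable def permPeriod {n : ℕ} (π : Equiv.Perm (Box n)) (j : Box n) : ℕ :=
  sInf {m : ℕ | 0 < m ∧ (π ^ m) j = j}

/-- `i_first(π)` for the threshold `t`. -/
noncomputable def iFirst {n : ℕ} (t : ℝ) (π : Equiv.Perm (Box n)) : ℕ :=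
  sInf {j : ℕ | ((((π ^ j) (boxZero n) : Box n) : ℤ) : ℝ) ≤ t ∧
    t < ((((π ^ (j + 1)) (boxZero n) : Box n) : ℤ) : ℝ)}

/-- `i_last(π)` for the threshold `t`. -/
noncomputable def iLast {n : ℕ} (t : ℝ) (π : Equiv.Perm (Box n)) : ℕ :=
  sSup {j : ℕ | j < permPeriod π (boxZero n) ∧
    ((((π ^ (j + 1)) (boxZero n) : Box n) : ℤ) : ℝ) ≤ t ∧
    t < ((((π ^ j) (boxZero n) : Box n) : ℤ) : ℝ)}

/-- The uncrossing map `Φ_t(π) = π ∘ (π^{i_first+1}(0)  π^{i_last+1}(0))`. -/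
noncomputable def Phi {n : ℕ} (t : ℝ) (π : Equiv.Perm (Box n)) : Equiv.Perm (Box n) :=
  π * Equiv.swap ((π ^ (iFirst t π + 1)) (boxZero n)) ((π ^ (iLast t π + 1)) (boxZero n))


namespace CycTail


variable {n : ℕ}

def orbSet (π : Equiv.Perm (Box n)) (j : Box n) : Set ℤ :=
  {x : ℤ | ∃ k : ℤ, (((π ^ k) j : Box n) : ℤ) = x}

lemma zpow_exists_nat (g : Equiv.Perm (Box n)) (k : ℤ) : ∃ m : ℕ, g ^ k = g ^ m := by
  refine ⟨(k % (orderOf g : ℤ)).toNat, ?_⟩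
  have h : 0 < orderOf g := orderOf_pos g
  rw [← zpow_natCast, Int.toNat_of_nonneg (Int.emod_nonneg _ (by exact_mod_cast h.ne'))]
  exact (zpow_mod_orderOf g k).symm

lemma orbSet_finite (π : Equiv.Perm (Box n)) (j : Box n) : (orbSet π j).Finite :=
  Set.Finite.subset (Set.finite_range (fun b : Box n => (b : ℤ)))
    (by rintro x ⟨k, rfl⟩; exact ⟨_, rfl⟩)

lemma mem_orbSet_nat (π : Equiv.Perm (Box n)) (j : Box n) (k : ℕ) :
    (((π ^ k) j : Box n) : ℤ) ∈ orbSet π j := ⟨(k : ℤ), by rw [zpow_natCast]⟩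

lemma orbSet_nonempty (π : Equiv.Perm (Box n)) (j : Box n) : (orbSet π j).Nonempty :=
  ⟨_, mem_orbSet_nat π j 0⟩

lemma maxCycle_mem (π : Equiv.Perm (Box n)) (j : Box n) : maxCycle π j ∈ orbSet π j :=
  (orbSet_nonempty π j).csSup_mem (orbSet_finite π j)

lemma minCycle_mem (π : Equiv.Perm (Box n)) (j : Box n) : minCycle π j ∈ orbSet π j :=
  (orbSet_nonempty π j).csInf_mem (orbSet_finite π j)

lemma le_maxCycle (π : Equiv.Perm (Box n)) (j : Box n) {x : ℤ} (hx : x ∈ orbSet π j) :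
    x ≤ maxCycle π j := le_csSup (orbSet_finite π j).bddAbove hx

lemma minCycle_le (π : Equiv.Perm (Box n)) (j : Box n) {x : ℤ} (hx : x ∈ orbSet π j) :
    minCycle π j ≤ x := csInf_le (orbSet_finite π j).bddBelow hx

lemma maxCycle_le (π : Equiv.Perm (Box n)) (j : Box n) {t : ℤ}
    (h : ∀ x ∈ orbSet π j, x ≤ t) : maxCycle π j ≤ t := csSup_le (orbSet_nonempty π j) h

lemma pow_succ_apply (π : Equiv.Perm (Box n)) (k : ℕ) (j : Box n) :
    (π ^ (k + 1)) j = π ((π ^ k) j) := by rw [pow_succ']; rfl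

lemma uncross {W : ℕ} (π : Equiv.Perm (Box n)) (hπ : π ∈ SW n W)
    (j : Box n) (t : ℤ) (hjt : (j : ℤ) ≤ t) (hM : t < maxCycle π j) :
    ∃ x y : Box n, (t - W < (x : ℤ) ∧ (x : ℤ) ≤ t) ∧ (t < (y : ℤ) ∧ (y : ℤ) ≤ t + W) ∧
      (π * Equiv.swap x y) ∈ SW n W ∧
      maxCycle (π * Equiv.swap x y) j ≤ t ∧ t - W < maxCycle (π * Equiv.swap x y) j := by
  classical
  set v : ℕ → ℤ := fun k => (((π ^ k) j : Box n) : ℤ) with hvdef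
  set w : ℕ → ℤ := fun k => (((π⁻¹ ^ k) j : Box n) : ℤ) with hwdef
  have hv0 : v 0 ≤ t := by simpa [v] using hjt
  have hw0 : w 0 ≤ t := by
    show (((π⁻¹ ^ 0) j : Box n) : ℤ) ≤ t; rw [pow_zero]; exact hjt
  obtain ⟨K, hK⟩ := maxCycle_mem π j
  -- some nat power exceeding t, forwards
  obtain ⟨mf, hmf⟩ := zpow_exists_nat π K
  have hvf : t < v mf := by rw [hvdef]; simp only; rw [← hmf, hK]; exact hM
  -- backwards
  obtain ⟨mb, hmb⟩ := zpow_exists_nat π⁻¹ (-K)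
  have hKinv : π ^ K = π⁻¹ ^ mb := by
    rw [← hmb, inv_zpow, zpow_neg, inv_inv]
  have hwf : t < w mb := by rw [hwdef]; simp only; rw [← hKinv, hK]; exact hM
  -- first up-crossing index
  have hPne : ∃ k : ℕ, t < v (k + 1) := by
    rcases mf with _ | m
    · exact absurd hvf (not_lt.2 hv0)
    · exact ⟨m, hvf⟩
  have hQne : ∃ k : ℕ, t < w (k + 1) := by
    rcases mb with _ | m
    · exact absurd hwf (not_lt.2 hw0)
    · exact ⟨m, hwf⟩
  set a := Nat.find hPne with hadef
  have hva1 : t < v (a + 1) := Nat.find_spec hPne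
  have hva : ∀ i, i ≤ a → v i ≤ t := by
    intro i hi
    rcases i with _ | i
    · exact hv0
    · exact not_lt.1 (Nat.find_min hPne (by omega))
  set b := Nat.find hQne with hbdef
  have hwb1 : t < w (b + 1) := Nat.find_spec hQne
  have hwb : ∀ i, i ≤ b → w i ≤ t := by
    intro i hi
    rcases i with _ | i
    · exact hw0
    · exact not_lt.1 (Nat.find_min hQne (by omega))
  set x : Box n := (π ^ a) j with hxdef
  set y : Box n := (π⁻¹ ^ (b + 1)) j with hydef
  have hπx : π x = (π ^ (a + 1)) j := (pow_succ_apply π a j).symm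
  have hπy : π y = (π⁻¹ ^ b) j := by
    rw [hydef, pow_succ_apply π⁻¹ b j]; exact Equiv.apply_symm_apply π _
  have hxval : (x : ℤ) = v a := rfl
  have hyval : (y : ℤ) = w (b + 1) := rfl
  have hvx : v a ≤ t := hva a le_rfl
  have hdx : |v (a + 1) - v a| ≤ (W : ℤ) := by
    have := hπ x; rwa [hπx, hxval] at this
  have hdy : |w b - w (b + 1)| ≤ (W : ℤ) := by
    have := hπ y; rwa [hπy, hyval] at this
  have hxlow : t - W < v a := by
    have h1 := abs_le.1 hdx; omega
  have hyup : w (b + 1) ≤ t + W := by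
    have h1 := abs_le.1 hdy
    have := hwb b le_rfl; omega
  have hwbub : t - W < w b := by
    have h1 := abs_le.1 hdy; omega
  have hxy : x ≠ y := by
    intro h
    have : (x : ℤ) = (y : ℤ) := by rw [h]
    rw [hxval, hyval] at this; omega
  set σ := π * Equiv.swap x y with hσdef
  have hσx : σ x = π y := by
    simp [hσdef, Equiv.Perm.mul_apply, Equiv.swap_apply_left]
  have hσy : σ y = π x := by
    simp [hσdef, Equiv.Perm.mul_apply, Equiv.swap_apply_right]
  have hσz : ∀ z, z ≠ x → z ≠ y → σ z = π z := by
    intro z h1 h2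
    simp [hσdef, Equiv.Perm.mul_apply, Equiv.swap_apply_of_ne_of_ne h1 h2]
  have hσSW : σ ∈ SW n W := by
    intro i
    by_cases hix : i = x
    · subst hix
      rw [hσx, hπy]
      have : ((((π⁻¹ ^ b) j : Box n)) : ℤ) = w b := rfl
      rw [this, hxval]
      have := hwb b le_rfl
      rw [abs_le]; omega
    · by_cases hiy : i = y
      · subst hiy
        rw [hσy, hπx]
        have : ((((π ^ (a+1)) j : Box n)) : ℤ) = v (a+1) := rfl
        rw [this, hyval]
        have : v (a+1) ≤ v a + W := by have := abs_le.1 hdx; omega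
        rw [abs_le]; omega
      · rw [hσz i hix hiy]; exact hπ i
  -- the invariant set
  set U : Finset (Box n) :=
    ((range (a + 1)).image (fun i => (π ^ i) j)) ∪
      ((range (b + 1)).image (fun i => (π⁻¹ ^ i) j)) with hUdef
  have hUval : ∀ u ∈ U, (u : ℤ) ≤ t := by
    intro u hu
    rw [hUdef, mem_union] at hu
    rcases hu with hu | hu
    · obtain ⟨i, hi, rfl⟩ := mem_image.1 hu
      exact hva i (by simpa using Nat.lt_succ_iff.1 (mem_range.1 hi))
    · obtain ⟨i, hi, rfl⟩ := mem_image.1 hu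
      exact hwb i (by simpa using Nat.lt_succ_iff.1 (mem_range.1 hi))
  have hxU : x ∈ U := by
    rw [hUdef, mem_union]; left
    exact mem_image.2 ⟨a, mem_range.2 (Nat.lt_succ_self a), rfl⟩
  have hjU : j ∈ U := by
    rw [hUdef, mem_union]; left
    exact mem_image.2 ⟨0, mem_range.2 (Nat.succ_pos a), by simp⟩
  have hUinv : ∀ u ∈ U, σ u ∈ U := by
    intro u hu
    by_cases hux : u = x
    · subst hux
      rw [hσx, hπy, hUdef, mem_union]
      right
      exact mem_image.2 ⟨b, mem_range.2 (Nat.lt_succ_self b), rfl⟩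
    · have huy : u ≠ y := by
        intro h
        have h1 : (u : ℤ) ≤ t := hUval u hu
        have h2 : (u : ℤ) = w (b+1) := by rw [h, hyval]
        omega
      rw [hσz u hux huy]
      rw [hUdef, mem_union] at hu
      rcases hu with hu | hu
      · obtain ⟨i, hi, rfl⟩ := mem_image.1 hu
        have hia : i ≤ a := Nat.lt_succ_iff.1 (mem_range.1 hi)
        have hine : i ≠ a := by
          intro h; subst h; exact hux rfl
        rw [hUdef, mem_union]; left
        refine mem_image.2 ⟨i + 1, mem_range.2 (by omega), ?_⟩
        exact (pow_succ_apply π i j)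
      · obtain ⟨i, hi, rfl⟩ := mem_image.1 hu
        rcases i with _ | i
        · -- u = j
          have hane : a ≠ 0 := by
            intro h
            apply hux
            rw [hxdef, h, pow_zero]; simp
          rw [hUdef, mem_union]; left
          refine mem_image.2 ⟨1, mem_range.2 (by omega), ?_⟩
          simp [pow_one]
        · rw [hUdef, mem_union]; right
          have hib : i < b + 1 := by have := mem_range.1 hi; omega
          refine mem_image.2 ⟨i, mem_range.2 hib, ?_⟩
          rw [pow_succ_apply π⁻¹ i j]
          exact (Equiv.apply_symm_apply π _).symm
  have hpow : ∀ k : ℕ, (σ ^ k) j ∈ U := by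
    intro k
    induction k with
    | zero => simpa using hjU
    | succ k ih => rw [pow_succ_apply]; exact hUinv _ ih
  have hmaxle : maxCycle σ j ≤ t := by
    apply maxCycle_le
    rintro z ⟨K, rfl⟩
    obtain ⟨m, hm⟩ := zpow_exists_nat σ K
    rw [hm]
    exact hUval _ (hpow m)
  -- x is in the σ-orbit of j
  have hQ : ∃ i : ℕ, (π ^ i) j = x := ⟨a, rfl⟩
  set i0 := Nat.find hQ with hi0def
  have hi0a : i0 ≤ a := Nat.find_min' hQ rfl
  have hfix : ∀ i, i ≤ i0 → (σ ^ i) j = (π ^ i) j := by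
    intro i hi
    induction i with
    | zero => simp
    | succ i ih =>
      rw [pow_succ_apply, pow_succ_apply, ih (by omega)]
      have h1 : (π ^ i) j ≠ x := Nat.find_min hQ (by omega)
      have h2 : (π ^ i) j ≠ y := by
        intro h
        have hval : v i ≤ t := hva i (by omega)
        have : (((π ^ i) j : Box n) : ℤ) = w (b+1) := by rw [h, hyval]
        have hvi : v i = (((π ^ i) j : Box n) : ℤ) := rfl
        omega
      exact hσz _ h1 h2
  have hxorb : (x : ℤ) ∈ orbSet σ j := by
    have : (σ ^ i0) j = x := by rw [hfix i0 le_rfl]; exact Nat.find_spec hQ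
    refine ⟨(i0 : ℤ), ?_⟩
    rw [zpow_natCast, this]
  have hmaxgt : t - W < maxCycle σ j :=
    lt_of_lt_of_le (by rw [← hxval] at hxlow; exact hxlow) (le_maxCycle σ j hxorb)
  exact ⟨x, y, ⟨hxlow, hvx⟩, ⟨hwb1, hyup⟩, hσSW, hmaxle, hmaxgt⟩


open scoped Classical in
lemma card_step {W : ℕ} (j : Box n) (t : ℤ) (hjt : (j : ℤ) ≤ t) :
    (univ.filter fun π : Equiv.Perm (Box n) => π ∈ SW n W ∧ t < maxCycle π j).card ≤
      W * W * (univ.filter fun π : Equiv.Perm (Box n) =>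
        π ∈ SW n W ∧ t - W < maxCycle π j ∧ maxCycle π j ≤ t).card := by
  classical
  set D := (univ.filter fun π : Equiv.Perm (Box n) =>
        π ∈ SW n W ∧ t - W < maxCycle π j ∧ maxCycle π j ≤ t) with hD
  set T : Finset (ℤ × ℤ × Equiv.Perm (Box n)) :=
    (Finset.Ioc (t - W) t) ×ˢ (Finset.Ioc t (t + W)) ×ˢ D with hT
  have hTcard : T.card = W * W * D.card := by
    rw [hT, Finset.card_product, Finset.card_product, Int.card_Ioc, Int.card_Ioc]
    simp [mul_assoc]
  rw [← hTcard]
  apply Finset.card_le_card_of_injOn (fun π =>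
    if h : π ∈ SW n W ∧ t < maxCycle π j then
      (((uncross π h.1 j t hjt h.2).choose : ℤ),
       ((uncross π h.1 j t hjt h.2).choose_spec.choose : ℤ),
       π * Equiv.swap (uncross π h.1 j t hjt h.2).choose
         (uncross π h.1 j t hjt h.2).choose_spec.choose)
    else (0, 0, 1))
  · intro π hπ
    rw [Finset.mem_coe] at hπ ⊢
    rw [mem_filter] at hπ
    have h := hπ.2
    simp only [dif_pos h]
    obtain ⟨hx, hy, hsw, hle, hgt⟩ := (uncross π h.1 j t hjt h.2).choose_spec.choose_spec
    rw [hT]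
    refine Finset.mem_product.2 ⟨Finset.mem_Ioc.2 hx, Finset.mem_product.2
      ⟨Finset.mem_Ioc.2 hy, ?_⟩⟩
    rw [hD, mem_filter]
    exact ⟨mem_univ _, hsw, hgt, hle⟩
  · intro π1 h1 π2 h2 heq
    rw [coe_filter] at h1 h2
    dsimp only at heq
    rw [dif_pos h1.2, dif_pos h2.2] at heq
    rw [Prod.ext_iff] at heq
    obtain ⟨ex, heq2⟩ := heq
    dsimp only at ex
    rw [Prod.ext_iff] at heq2
    obtain ⟨ey, eσ⟩ := heq2
    dsimp only at ey
    have hx : (uncross π1 h1.2.1 j t hjt h1.2.2).choose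
        = (uncross π2 h2.2.1 j t hjt h2.2.2).choose := Subtype.ext ex
    have hy : (uncross π1 h1.2.1 j t hjt h1.2.2).choose_spec.choose
        = (uncross π2 h2.2.1 j t hjt h2.2.2).choose_spec.choose := Subtype.ext ey
    dsimp only at eσ
    have e2 : Equiv.swap (uncross π1 h1.2.1 j t hjt h1.2.2).choose
        (uncross π1 h1.2.1 j t hjt h1.2.2).choose_spec.choose
        = Equiv.swap (uncross π2 h2.2.1 j t hjt h2.2.2).choose
        (uncross π2 h2.2.1 j t hjt h2.2.2).choose_spec.choose :=
      congrArg₂ (fun u v => Equiv.swap u v) hx hy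
    exact mul_right_cancel (eσ.trans (congrArg (π2 * ·) e2.symm))

open scoped Classical in
lemma card_decay {W : ℕ} (hW : 1 ≤ W) (j : Box n) (t0 : ℤ) (hjt : (j : ℤ) ≤ t0) (m : ℕ) :
    ((univ.filter fun π : Equiv.Perm (Box n) =>
        π ∈ SW n W ∧ t0 + (m : ℤ) * W < maxCycle π j).card : ℝ) ≤
      ((W * W : ℝ) / (W * W + 1)) ^ m *
        ((univ.filter fun π : Equiv.Perm (Box n) => π ∈ SW n W).card : ℝ) := by
  induction m with
  | zero =>
      simp only [Nat.cast_zero, zero_mul, add_zero, pow_zero, one_mul]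
      have : (univ.filter fun π : Equiv.Perm (Box n) => π ∈ SW n W ∧ t0 < maxCycle π j) ⊆
          (univ.filter fun π : Equiv.Perm (Box n) => π ∈ SW n W) := by
        intro π h
        rw [mem_filter] at h ⊢
        exact ⟨h.1, h.2.1⟩
      exact_mod_cast card_le_card this
  | succ m ih =>
      set t : ℤ := t0 + ((m : ℤ) + 1) * W with htdef
      have hjt' : (j : ℤ) ≤ t := by nlinarith [Int.natCast_nonneg W, Int.natCast_nonneg m]
      set A := (univ.filter fun π : Equiv.Perm (Box n) => π ∈ SW n W ∧ t < maxCycle π j) with hA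
      set Am := (univ.filter fun π : Equiv.Perm (Box n) =>
        π ∈ SW n W ∧ t0 + (m : ℤ) * W < maxCycle π j) with hAm
      set D := (univ.filter fun π : Equiv.Perm (Box n) =>
        π ∈ SW n W ∧ t - W < maxCycle π j ∧ maxCycle π j ≤ t) with hDdef
      have h1 : A.card ≤ W * W * D.card := card_step j t hjt'
      have hsub : D ∪ A ⊆ Am := by
        intro π h
        rw [mem_union] at h
        rw [hAm, mem_filter]
        rcases h with h | h
        · rw [hDdef, mem_filter] at h
          refine ⟨mem_univ _, h.2.1, ?_⟩
          have := h.2.2.1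
          rw [htdef] at this
          nlinarith [this]
        · rw [hA, mem_filter] at h
          refine ⟨mem_univ _, h.2.1, ?_⟩
          have := h.2.2
          rw [htdef] at this
          nlinarith [this, Int.natCast_nonneg W]
      have hdisj : Disjoint D A := by
        rw [Finset.disjoint_left]
        intro π hD hA'
        rw [hDdef, mem_filter] at hD
        rw [hA, mem_filter] at hA'
        exact absurd hA'.2.2 (not_lt.2 hD.2.2.2)
      have h2 : D.card + A.card ≤ Am.card := by
        rw [← Finset.card_union_of_disjoint hdisj]
        exact card_le_card hsub
      have hWpos : (0:ℝ) < (W:ℝ) * W + 1 := by positivity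
      have hr1 : (A.card : ℝ) ≤ (W:ℝ) * W * D.card := by exact_mod_cast h1
      have hr2 : (D.card : ℝ) + A.card ≤ (Am.card : ℝ) := by exact_mod_cast h2
      have hq : (A.card : ℝ) ≤ ((W:ℝ) * W / ((W:ℝ) * W + 1)) * Am.card := by
        rw [div_mul_eq_mul_div, le_div_iff₀ hWpos]
        nlinarith [hr1, hr2]
      have hgoal : (A.card : ℝ) ≤
          ((W * W : ℝ) / (W * W + 1)) ^ (m + 1) *
            ((univ.filter fun π : Equiv.Perm (Box n) => π ∈ SW n W).card : ℝ) := by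
        calc (A.card : ℝ) ≤ ((W:ℝ) * W / ((W:ℝ) * W + 1)) * Am.card := hq
          _ ≤ ((W:ℝ) * W / ((W:ℝ) * W + 1)) * (((W * W : ℝ) / (W * W + 1)) ^ m *
              ((univ.filter fun π : Equiv.Perm (Box n) => π ∈ SW n W).card : ℝ)) := by
            exact mul_le_mul_of_nonneg_left ih (by positivity)
          _ = ((W * W : ℝ) / (W * W + 1)) ^ (m + 1) *
              ((univ.filter fun π : Equiv.Perm (Box n) => π ∈ SW n W).card : ℝ) := by ring
      have heq : t0 + (((m + 1 : ℕ)) : ℤ) * W = t := by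
        rw [htdef]; push_cast; ring
      rw [heq]
      exact hgoal

def negBox (n : ℕ) : Equiv.Perm (Box n) where
  toFun x := ⟨-x.1, by have := x.2; rw [Finset.mem_Icc] at *; omega⟩
  invFun x := ⟨-x.1, by have := x.2; rw [Finset.mem_Icc] at *; omega⟩
  left_inv x := by apply Subtype.ext; simp
  right_inv x := by apply Subtype.ext; simp

lemma negBox_val (x : Box n) : ((negBox n x : Box n) : ℤ) = -(x : ℤ) := rfl

lemma negBox_inv : (negBox n)⁻¹ = negBox n := by
  apply Equiv.ext; intro x; rfl

lemma negBox_mul_self : negBox n * negBox n = 1 := by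
  apply Equiv.ext; intro x
  apply Subtype.ext
  show ((negBox n (negBox n x) : Box n) : ℤ) = ((x : Box n) : ℤ)
  rw [negBox_val, negBox_val, neg_neg]

def conjNeg (π : Equiv.Perm (Box n)) : Equiv.Perm (Box n) := negBox n * π * negBox n

lemma conjNeg_conjNeg (π : Equiv.Perm (Box n)) : conjNeg (conjNeg π) = π := by
  unfold conjNeg
  calc negBox n * (negBox n * π * negBox n) * negBox n
      = (negBox n * negBox n) * π * (negBox n * negBox n) := by group
    _ = π := by rw [negBox_mul_self]; group

lemma conjNeg_apply (π : Equiv.Perm (Box n)) (x : Box n) :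
    conjNeg π x = negBox n (π (negBox n x)) := rfl

lemma conjNeg_SW {W : ℕ} (π : Equiv.Perm (Box n)) (hπ : π ∈ SW n W) :
    conjNeg π ∈ SW n W := by
  intro i
  rw [conjNeg_apply, negBox_val]
  have := hπ (negBox n i)
  rw [negBox_val] at this
  rw [show -((π (negBox n i) : Box n) : ℤ) - (i : ℤ)
      = -(((π (negBox n i) : Box n) : ℤ) - -(i:ℤ)) by ring, abs_neg]
  exact this

lemma conjNeg_zpow (π : Equiv.Perm (Box n)) (k : ℤ) :
    (conjNeg π) ^ k = negBox n * π ^ k * negBox n := by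
  unfold conjNeg
  conv_lhs => rw [show negBox n * π * negBox n = negBox n * π * (negBox n)⁻¹ by rw [negBox_inv]]
  rw [conj_zpow, negBox_inv]

lemma orbSet_conjNeg (π : Equiv.Perm (Box n)) (j : Box n) :
    orbSet (conjNeg π) (negBox n j) = {z : ℤ | -z ∈ orbSet π j} := by
  ext z
  constructor
  · rintro ⟨k, rfl⟩
    rw [conjNeg_zpow]
    refine ⟨k, ?_⟩
    have : (negBox n * π ^ k * negBox n) (negBox n j) = negBox n ((π ^ k) j) := by
      simp [Equiv.Perm.mul_apply]
      have : negBox n (negBox n j) = j := by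
        rw [← Equiv.Perm.mul_apply, negBox_mul_self]; rfl
      rw [this]
    rw [this, negBox_val]
    ring
  · rintro hz
    obtain ⟨k, hk⟩ := hz
    refine ⟨k, ?_⟩
    rw [conjNeg_zpow]
    have : (negBox n * π ^ k * negBox n) (negBox n j) = negBox n ((π ^ k) j) := by
      simp [Equiv.Perm.mul_apply]
      have h2 : negBox n (negBox n j) = j := by
        rw [← Equiv.Perm.mul_apply, negBox_mul_self]; rfl
      rw [h2]
    rw [this, negBox_val, hk]
    ring

lemma maxCycle_conjNeg (π : Equiv.Perm (Box n)) (j : Box n) :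
    maxCycle (conjNeg π) (negBox n j) = -(minCycle π j) := by
  have hgreat : IsGreatest (orbSet (conjNeg π) (negBox n j)) (-(minCycle π j)) := by
    constructor
    · rw [orbSet_conjNeg]
      simp only [Set.mem_setOf_eq, neg_neg]
      exact minCycle_mem π j
    · intro z hz
      rw [orbSet_conjNeg] at hz
      have := minCycle_le π j hz
      omega
  exact hgreat.csSup_eq

open scoped Classical in
lemma card_decay_min {W : ℕ} (hW : 1 ≤ W) (j : Box n) (m : ℕ) :
    ((univ.filter fun π : Equiv.Perm (Box n) =>
        π ∈ SW n W ∧ minCycle π j < (j : ℤ) - (m : ℤ) * W).card : ℝ) ≤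
      ((W * W : ℝ) / (W * W + 1)) ^ m *
        ((univ.filter fun π : Equiv.Perm (Box n) => π ∈ SW n W).card : ℝ) := by
  have hbij : (univ.filter fun π : Equiv.Perm (Box n) =>
      π ∈ SW n W ∧ minCycle π j < (j : ℤ) - (m : ℤ) * W).card =
      (univ.filter fun π : Equiv.Perm (Box n) =>
      π ∈ SW n W ∧ ((negBox n j : Box n) : ℤ) + (m : ℤ) * W < maxCycle π (negBox n j)).card := by
    apply Finset.card_bij (fun π _ => conjNeg π)
    · intro π hπ
      rw [mem_filter] at hπ ⊢
      refine ⟨mem_univ _, conjNeg_SW π hπ.2.1, ?_⟩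
      rw [maxCycle_conjNeg, negBox_val]
      have := hπ.2.2
      omega
    · intro π1 h1 π2 h2 heq
      have := congrArg conjNeg heq
      rwa [conjNeg_conjNeg, conjNeg_conjNeg] at this
    · intro τ hτ
      refine ⟨conjNeg τ, ?_, conjNeg_conjNeg τ⟩
      rw [mem_filter] at hτ ⊢
      refine ⟨mem_univ _, conjNeg_SW τ hτ.2.1, ?_⟩
      have h2 := hτ.2.2
      have h3 := maxCycle_conjNeg (conjNeg τ) j
      rw [conjNeg_conjNeg] at h3
      rw [h3, negBox_val] at h2
      omega
  rw [hbij]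
  exact card_decay hW (negBox n j) ((negBox n j : Box n) : ℤ) le_rfl m


end CycTail

set_option maxHeartbeats 1000000

open CycTail in
/-- There is a universal constant `c > 0` such that for all integers
`n, W ≥ 1`, every `j ∈ [-n,n]` and every real `λ ≥ 1`,
`P_{∞,W,n}(diam C_π(j) ≥ λ) ≤ 2 exp(-c λ / W³)`. -/
theorem cycle_diameter_tail_uniform :
    ∃ c : ℝ, 0 < c ∧ ∀ (n W : ℕ), 1 ≤ n → 1 ≤ W →
      ∀ (j : Box n) (lam : ℝ), 1 ≤ lam →
        unifProb W n {π | lam ≤ ((diamCycle π j : ℤ) : ℝ)} ≤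
          2 * Real.exp (-c * lam / (W : ℝ) ^ 3) := by
  classical
  refine ⟨1/8, by norm_num, ?_⟩
  intro n W hn hW j lam hlam
  have hid : (1 : Equiv.Perm (Box n)) ∈ SW n W := by
    intro i; simp
  have hWR : (1:ℝ) ≤ (W:ℝ) := by exact_mod_cast hW
  have hW3 : (0:ℝ) < (W:ℝ)^3 := by positivity
  have hlam0 : (0:ℝ) < lam := lt_of_lt_of_le one_pos hlam
  unfold unifProb
  have hden : (0:ℝ) <
      ((univ.filter fun π : Equiv.Perm (Box n) => π ∈ SW n W).card : ℝ) := by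
    have : 0 < (univ.filter fun π : Equiv.Perm (Box n) => π ∈ SW n W).card :=
      Finset.card_pos.2 ⟨1, mem_filter.2 ⟨mem_univ _, hid⟩⟩
    exact_mod_cast this
  rw [div_le_iff₀ hden]
  set S := ((univ.filter fun π : Equiv.Perm (Box n) => π ∈ SW n W).card : ℝ) with hSdef
  have hexphalf : Real.exp (-(1/2:ℝ)) ≥ 1/2 := by
    have h1 : Real.exp (1/2:ℝ) * Real.exp (1/2:ℝ) = Real.exp 1 := by
      rw [← Real.exp_add]; norm_num
    have h2 : Real.exp (1/2:ℝ) < 2 := by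
      nlinarith [Real.exp_one_lt_d9, Real.exp_pos (1/2:ℝ)]
    have h3 : Real.exp (-(1/2:ℝ)) * Real.exp (1/2:ℝ) = 1 := by
      rw [← Real.exp_add]; norm_num
    nlinarith [Real.exp_pos (-(1/2:ℝ)), h2, h3,
      mul_pos (Real.exp_pos (-(1/2:ℝ))) (sub_pos.2 h2)]
  by_cases hcase : lam ≤ 4 * (W:ℝ)^3
  · -- trivial regime
    have harg : -(1/2:ℝ) ≤ -(1/8:ℝ) * lam / (W:ℝ)^3 := by
      rw [neg_mul, neg_div, neg_le_neg_iff]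
      rw [div_le_iff₀ hW3]
      nlinarith
    have hexp : (1/2:ℝ) ≤ Real.exp (-(1/8:ℝ) * lam / (W:ℝ)^3) :=
      le_trans hexphalf (Real.exp_le_exp.2 harg)
    have hnum : ((univ.filter fun π : Equiv.Perm (Box n) =>
        π ∈ SW n W ∧ π ∈ {π | lam ≤ ((diamCycle π j : ℤ) : ℝ)}).card : ℝ) ≤ S := by
      rw [hSdef]
      have : (univ.filter fun π : Equiv.Perm (Box n) =>
          π ∈ SW n W ∧ π ∈ {π | lam ≤ ((diamCycle π j : ℤ) : ℝ)}) ⊆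
          (univ.filter fun π : Equiv.Perm (Box n) => π ∈ SW n W) := by
        intro π h
        rw [mem_filter] at h ⊢
        exact ⟨h.1, h.2.1⟩
      exact_mod_cast card_le_card this
    calc ((univ.filter fun π : Equiv.Perm (Box n) =>
        π ∈ SW n W ∧ π ∈ {π | lam ≤ ((diamCycle π j : ℤ) : ℝ)}).card : ℝ)
        ≤ S := hnum
      _ = 1 * S := (one_mul S).symm
      _ ≤ (2 * Real.exp (-(1/8:ℝ) * lam / (W:ℝ)^3)) * S := by
          apply mul_le_mul_of_nonneg_right _ (le_of_lt hden)
          linarith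
      _ = 2 * Real.exp (-(1/8) * lam / (W:ℝ)^3) * S := by ring
  · push_neg at hcase
    set u : ℝ := lam / (2*(W:ℝ)) with hudef
    have hWpos : (0:ℝ) < (W:ℝ) := by linarith
    have hWW3 : (W:ℝ) ≤ (W:ℝ)^3 := by
      have h1 : (W:ℝ)^3 - W = (W:ℝ)*((W:ℝ)-1)*((W:ℝ)+1) := by ring
      have h2 : (0:ℝ) ≤ (W:ℝ)*((W:ℝ)-1)*((W:ℝ)+1) :=
        mul_nonneg (mul_nonneg (by linarith) (by linarith)) (by linarith)
      linarith
    have hu2 : (2:ℝ) ≤ u := by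
      rw [hudef, le_div_iff₀ (by positivity)]
      nlinarith
    have hlameq : lam = 2*(W:ℝ)*u := by
      rw [hudef]; field_simp
    set mS : ℕ := ⌈u⌉₊ - 1 with hmSdef
    have hupos : (0:ℝ) < u := by
      rw [hudef]; positivity
    have hceil1 : 1 ≤ ⌈u⌉₊ := Nat.ceil_pos.2 hupos
    have hmScast : (mS:ℝ) = (⌈u⌉₊ : ℝ) - 1 := by
      rw [hmSdef]
      push_cast [Nat.cast_sub hceil1]
      ring
    have hmlt : (mS:ℝ) < u := by
      have := Nat.ceil_lt_add_one (le_of_lt (lt_of_lt_of_le two_pos hu2))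
      rw [hmScast]; linarith
    have hmge : u - 1 ≤ (mS:ℝ) := by
      have := Nat.le_ceil u
      rw [hmScast]; linarith
    have hm2 : 2*(mS:ℝ)*(W:ℝ) < lam := by nlinarith
    have hm4 : lam ≤ 4*(W:ℝ)*(mS:ℝ) := by nlinarith
    -- event inclusion
    have hsub : (univ.filter fun π : Equiv.Perm (Box n) =>
        π ∈ SW n W ∧ π ∈ {π | lam ≤ ((diamCycle π j : ℤ) : ℝ)}) ⊆
        (univ.filter fun π : Equiv.Perm (Box n) =>
          π ∈ SW n W ∧ (j:ℤ) + (mS : ℤ) * W < maxCycle π j) ∪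
        (univ.filter fun π : Equiv.Perm (Box n) =>
          π ∈ SW n W ∧ minCycle π j < (j:ℤ) - (mS : ℤ) * W) := by
      intro π h
      rw [mem_filter] at h
      have hE : lam ≤ ((diamCycle π j : ℤ) : ℝ) := h.2.2
      rw [mem_union, mem_filter, mem_filter]
      by_cases hmax : (j:ℤ) + (mS : ℤ) * W < maxCycle π j
      · exact Or.inl ⟨mem_univ _, h.2.1, hmax⟩
      · right
        refine ⟨mem_univ _, h.2.1, ?_⟩
        by_contra hmin
        push_neg at hmax hmin
        have hdZ : diamCycle π j ≤ 2*((mS:ℤ)*W) := by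
          unfold diamCycle; omega
        have hdR : ((diamCycle π j : ℤ) : ℝ) ≤ 2*((mS:ℝ)*(W:ℝ)) := by
          exact_mod_cast hdZ
        linarith
    have hNle : ((univ.filter fun π : Equiv.Perm (Box n) =>
        π ∈ SW n W ∧ π ∈ {π | lam ≤ ((diamCycle π j : ℤ) : ℝ)}).card : ℝ) ≤
        2 * (((W * W : ℝ) / (W * W + 1)) ^ mS * S) := by
      have step1 := card_le_card hsub
      have step2 := Finset.card_union_le
        (univ.filter fun π : Equiv.Perm (Box n) =>
          π ∈ SW n W ∧ (j:ℤ) + (mS : ℤ) * W < maxCycle π j)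
        (univ.filter fun π : Equiv.Perm (Box n) =>
          π ∈ SW n W ∧ minCycle π j < (j:ℤ) - (mS : ℤ) * W)
      have hmax := card_decay hW j ((j:ℤ)) le_rfl mS
      have hmin := card_decay_min hW j mS
      have : ((univ.filter fun π : Equiv.Perm (Box n) =>
          π ∈ SW n W ∧ π ∈ {π | lam ≤ ((diamCycle π j : ℤ) : ℝ)}).card : ℝ) ≤
          ((univ.filter fun π : Equiv.Perm (Box n) =>
            π ∈ SW n W ∧ (j:ℤ) + (mS : ℤ) * W < maxCycle π j).card : ℝ) +
          ((univ.filter fun π : Equiv.Perm (Box n) =>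
            π ∈ SW n W ∧ minCycle π j < (j:ℤ) - (mS : ℤ) * W).card : ℝ) := by
        exact_mod_cast le_trans step1 step2
      rw [hSdef]
      linarith
    -- exponential bound on the geometric factor
    have hqexp : ((W * W : ℝ) / (W * W + 1)) ^ mS ≤
        Real.exp (-(1/8:ℝ) * lam / (W:ℝ)^3) := by
      have hq1 : (W * W : ℝ) / (W * W + 1) ≤ Real.exp (-(1/((W:ℝ)*W+1))) := by
        have h := Real.add_one_le_exp (-(1/((W:ℝ)*W+1)))
        have heq : (W * W : ℝ) / (W * W + 1) = -(1/((W:ℝ)*W+1)) + 1 := by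
          field_simp
          ring
        rw [heq]
        exact h
      have hq0 : (0:ℝ) ≤ (W * W : ℝ) / (W * W + 1) := by positivity
      calc ((W * W : ℝ) / (W * W + 1)) ^ mS
          ≤ (Real.exp (-(1/((W:ℝ)*W+1)))) ^ mS := pow_le_pow_left₀ hq0 hq1 mS
        _ = Real.exp ((mS:ℝ) * (-(1/((W:ℝ)*W+1)))) := (Real.exp_nat_mul _ mS).symm
        _ ≤ Real.exp (-(1/8:ℝ) * lam / (W:ℝ)^3) := by
            apply Real.exp_le_exp.2
            rw [neg_mul, neg_div]
            rw [show (mS:ℝ) * (-(1/((W:ℝ)*W+1))) = -((mS:ℝ)/((W:ℝ)*W+1)) by ring]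
            rw [neg_le_neg_iff]
            rw [div_le_div_iff₀ (by positivity) (by positivity)]
            have hW21 : (1:ℝ) ≤ (W:ℝ)*W := by nlinarith [hWR]
            have h5 : lam ≤ lam*((W:ℝ)*W) := by
              nlinarith [mul_nonneg hlam0.le (sub_nonneg.2 hW21)]
            have h6 : lam*((W:ℝ)*W) ≤ 4*(W:ℝ)*(mS:ℝ)*((W:ℝ)*W) :=
              mul_le_mul_of_nonneg_right hm4 (by positivity)
            nlinarith [h5, h6]
    calc ((univ.filter fun π : Equiv.Perm (Box n) =>
        π ∈ SW n W ∧ π ∈ {π | lam ≤ ((diamCycle π j : ℤ) : ℝ)}).card : ℝ)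
        ≤ 2 * (((W * W : ℝ) / (W * W + 1)) ^ mS * S) := hNle
      _ ≤ 2 * (Real.exp (-(1/8:ℝ) * lam / (W:ℝ)^3) * S) := by
          apply mul_le_mul_of_nonneg_left _ (by norm_num)
          exact mul_le_mul_of_nonneg_right hqexp (le_of_lt hden)
      _ = 2 * Real.exp (-(1/8) * lam / (W:ℝ)^3) * S := by ring
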